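/- Let M, N be positive integers with N even and MN > 1, and define v_{j,ℓ}, w_{j,ℓ} as before. Then for every j ∈ {0,…,N/2-2}, the slope of the segment from v_{j,1} to v_{j+1,0} equals the slope of the segment from w_{j,1} to w_{j+1,0}. -/

import Mathlib

noncomputable def h (x : ℝ) : ℝ × ℝ := (x, x^2 - x)

noncomputable def segSlope (u v : ℝ × ℝ) : ℝ := (v.2 - u.2) / (v.1 - u.1)

noncomputable def vjl (M N j ℓ : ℕ) : ℝ × ℝ :=
  h ((2 * (M : ℝ) * ((j : ℝ) + (ℓ : ℝ)) - (ℓ : ℝ)) / ((M : ℝ) * (N : ℝ) - 1))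

noncomputable def wjl (M N j ℓ : ℕ) : ℝ × ℝ :=
  h (((M : ℝ) * (2 * (j : ℝ) + 1) - (1 - (ℓ : ℝ))) / ((M : ℝ) * (N : ℝ) - 1))

lemma chord_slope (a b : ℝ) (hab : a ≠ b) :
    segSlope (h a) (h b) = a + b - 1 := by
  have : b - a ≠ 0 := sub_ne_zero.mpr (Ne.symm hab)
  simp only [segSlope, h]
  rw [div_eq_iff this]
  ring

theorem stmt2 (M N : ℕ) (hM : 0 < M) (hN : 0 < N) (hNeven : Even N)
    (hMN : 1 < M * N) (j : ℕ) (hj : j ≤ N / 2 - 2) :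
    segSlope (vjl M N j 1) (vjl M N (j + 1) 0) =
      segSlope (wjl M N j 1) (wjl M N (j + 1) 0) := by
  have hMN' : (1 : ℝ) < (M : ℝ) * (N : ℝ) := by exact_mod_cast hMN
  have hD : (M : ℝ) * (N : ℝ) - 1 ≠ 0 := by linarith
  have hM' : (1 : ℝ) ≤ (M : ℝ) := by exact_mod_cast hM
  rw [vjl, vjl, wjl, wjl, chord_slope, chord_slope]
  · push_cast
    ring
  · intro hEq
    rw [div_eq_div_iff hD hD] at hEq; have := mul_right_cancel₀ hD hEq
    push_cast at this
    nlinarith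
  · intro hEq
    rw [div_eq_div_iff hD hD] at hEq; have := mul_right_cancel₀ hD hEq
    push_cast at this
    linarith
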